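/- For ν ∈ ℝ and ζ ∈ ℂ define the 2×2 complex matrix H(ν,ζ) with entries H₁₁ = 1 + ν(ζ − 1), H₁₂ = √3 ν(1 − ν)(ζ − 1), H₂₁ = √3 ν(1 − ζ), H₂₂ = 1 − 3ν(ζ + 1) + 3ν²(ζ − 1). Then for every ν ∈ [0, 1/3] and every ζ ∈ ℂ with |ζ| = 1, every eigenvalue λ of H(ν,ζ) satisfies |λ| ≤ 1. -/

import Mathlib

/-- The von Neumann amplification matrix of the piecewise-linear Lax–Wendroff DG scheme. -/
noncomputable def lxwDGAmpMatrix (ν : ℝ) (ζ : ℂ) : Matrix (Fin 2) (Fin 2) ℂ :=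
  !![1 + (ν : ℂ) * (ζ - 1),
     (Real.sqrt 3 : ℂ) * (ν : ℂ) * (1 - (ν : ℂ)) * (ζ - 1);
     (Real.sqrt 3 : ℂ) * (ν : ℂ) * (1 - ζ),
     1 - 3 * (ν : ℂ) * (ζ + 1) + 3 * (ν : ℂ) ^ 2 * (ζ - 1)]

open Complex in
/-- Characteristic equation of the amplification matrix. -/
lemma lxwDG_char (ν : ℝ) (ζ : ℂ) (lam : ℂ) (hlam : lam ∈ spectrum ℂ (lxwDGAmpMatrix ν ζ)) :
    lam ^ 2 - (((2:ℂ) - 4*ν - 3*(ν:ℂ)^2) + ν*(3*ν-2)*ζ) * lam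
      + (((1:ℂ)-ν)*(1-3*ν) - ν*(3*ν+2)*ζ) = 0 := by
  rw [spectrum.mem_iff] at hlam
  have hdet : ((algebraMap ℂ (Matrix (Fin 2) (Fin 2) ℂ) lam) - lxwDGAmpMatrix ν ζ).det = 0 := by
    by_contra h
    exact hlam ((Matrix.isUnit_iff_isUnit_det _).mpr (isUnit_iff_ne_zero.mpr h))
  have h3 : (Real.sqrt 3 : ℂ) * (Real.sqrt 3 : ℂ) = 3 := by
    norm_cast
    exact Real.mul_self_sqrt (by norm_num)
  rw [Matrix.det_fin_two] at hdet
  simp [lxwDGAmpMatrix, Matrix.algebraMap_eq_diagonal] at hdet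
  linear_combination hdet + (ν:ℂ)^2*(1-(ν:ℂ))*(ζ-1)*(1-ζ)*h3

set_option maxHeartbeats 1000000 in
open Complex in
/-- The piecewise-linear LxW-DG scheme is von Neumann stable for CFL numbers
`0 ≤ ν ≤ 1/3`. -/
theorem lxwDG_stable (ν : ℝ) (hν : ν ∈ Set.Icc (0 : ℝ) (1 / 3)) (ζ : ℂ) (hζ : ‖ζ‖ = 1)
    (lam : ℂ) (hlam : lam ∈ spectrum ℂ (lxwDGAmpMatrix ν ζ)) : ‖lam‖ ≤ 1 := by
  obtain ⟨hν0, hν3⟩ := hν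
  have hchar := lxwDG_char ν ζ lam hlam
  have hzns : Complex.normSq ζ = 1 := by
    have : ‖ζ‖ ^ 2 = 1 := by rw [hζ]; norm_num
    rw [← Complex.sq_norm]
    exact this
  have hz1 : ζ * (starRingEnd ℂ) ζ = 1 := by
    rw [Complex.mul_conj, hzns]; norm_num
  -- case ν = 1/3
  rcases eq_or_lt_of_le hν3 with h13 | h13
  · -- ν = 1/3 : self-inversive case
    subst h13
    set T : ℂ := (1 - ζ) / 3 with hT
    set u : ℂ := (starRingEnd ℂ) lam with hu
    have hchar' : lam ^ 2 - T * lam - ζ = 0 := by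
      rw [hT]; push_cast at hchar ⊢; linear_combination hchar
    by_contra hgt
    push_neg at hgt
    have hx1 : (1:ℝ) < ‖lam‖ := hgt
    have h3c : (starRingEnd ℂ) (3:ℂ) = 3 := map_ofNat _ 3
    have hconj : u ^ 2 - (starRingEnd ℂ) T * u - (starRingEnd ℂ) ζ = 0 := by
      have := congrArg (starRingEnd ℂ) hchar'
      simpa [hu, h3c] using this
    have hconjT : ζ * (starRingEnd ℂ) T = -T := by
      rw [hT, map_div₀, map_sub, map_one, h3c]
      field_simp
      linear_combination -hz1
    have hroot2' : 1 - T * u - ζ * u ^ 2 = 0 := by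
      linear_combination (-ζ) * hconj + (-u) * hconjT + (-1) * hz1
    have hfac : (1 - lam * u) * (1 - (T - lam) * u) = 0 := by
      linear_combination hroot2' - u ^ 2 * hchar'
    have hns : lam * u = ((‖lam‖ ^ 2 : ℝ) : ℂ) := by
      rw [hu, Complex.mul_conj, Complex.normSq_eq_norm_sq]
    have hnormT : ‖T‖ ≤ 2/3 := by
      rw [hT, norm_div]
      have h2 : ‖(1:ℂ) - ζ‖ ≤ 2 := by
        calc ‖(1:ℂ) - ζ‖ ≤ ‖(1:ℂ)‖ + ‖ζ‖ := norm_sub_le _ _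
        _ = 2 := by rw [hζ]; norm_num
      have h3 : ‖(3:ℂ)‖ = 3 := by norm_num
      rw [h3]; linarith
    rcases mul_eq_zero.mp hfac with h | h
    · -- |lam| = 1, contradiction with |lam| > 1
      have h1 : lam * u = 1 := by linear_combination -h
      rw [hns] at h1
      have : (‖lam‖ ^ 2 : ℝ) = 1 := by exact_mod_cast h1
      nlinarith
    · -- T * u = 1 + |lam|^2, giving ‖T‖ ≥ 2
      have hTu : T * u = ((1 + ‖lam‖ ^ 2 : ℝ) : ℂ) := by
        have hns' := hns
        push_cast at hns' ⊢
        linear_combination -h + hns'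
      have hnu : ‖u‖ = ‖lam‖ := by
        rw [hu, Complex.norm_conj]
      have hTn : ‖T‖ * ‖lam‖ = 1 + ‖lam‖ ^ 2 := by
        have := congrArg norm hTu
        rw [norm_mul, hnu, Complex.norm_real] at this
        rw [this, Real.norm_of_nonneg (by positivity)]
      nlinarith [sq_nonneg (‖lam‖ - 1)]
  rcases eq_or_lt_of_le hν0 with h0 | h0
  · -- ν = 0 : identity matrix
    have h1 : (lam - 1)^2 = 0 := by
      rw [← h0] at hchar
      push_cast at hchar
      linear_combination hchar
    have heq : lam = 1 := by
      have h2 := pow_eq_zero_iff (n := 2) (by norm_num) |>.mp h1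
      exact sub_eq_zero.mp h2
    simp [heq]
  · -- 0 < ν < 1/3 : strict Schur case
    by_contra hgt
    push_neg at hgt
    have hx1 : (1:ℝ) < ‖lam‖ := hgt
    set c : ℝ := ζ.re with hc
    set s : ℝ := ζ.im with hs
    have hcs : c ^ 2 + s ^ 2 = 1 := by
      have h := hzns
      rw [Complex.normSq_apply] at h
      rw [hc, hs]; nlinarith [h]
    have hzeta : ζ = (c : ℂ) + (s : ℂ) * Complex.I := (Complex.re_add_im ζ).symm
    set T : ℂ := ((2 - 4*ν - 3*ν^2 : ℝ) : ℂ) + ((ν*(3*ν-2) : ℝ) : ℂ) * ζ with hT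
    set D : ℂ := (((1-ν)*(1-3*ν) : ℝ) : ℂ) - ((ν*(3*ν+2) : ℝ) : ℂ) * ζ with hD
    have hchar' : lam ^ 2 - T * lam + D = 0 := by
      rw [hT, hD]; push_cast; linear_combination hchar
    set μ : ℂ := T - lam with hmu
    have hprod : lam * μ = D := by rw [hmu]; linear_combination -hchar'
    set x : ℝ := ‖lam‖ with hx
    set y : ℝ := ‖μ‖ with hy
    have nsq : ∀ z : ℂ, z * (starRingEnd ℂ) z = ((‖z‖ ^ 2 : ℝ) : ℂ) := by
      intro z
      rw [Complex.mul_conj, Complex.normSq_eq_norm_sq]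
    have hkey : T - D * (starRingEnd ℂ) T
        = lam * (1 - ((y ^ 2 : ℝ) : ℂ)) + μ * (1 - ((x ^ 2 : ℝ) : ℂ)) := by
      have h1 := nsq lam
      have h2 := nsq μ
      have hsum : T = lam + μ := by rw [hmu]; ring
      have h3 : (starRingEnd ℂ) T = (starRingEnd ℂ) lam + (starRingEnd ℂ) μ := by
        rw [hsum, map_add]
      rw [← hprod, h3]
      linear_combination -μ * h1 - lam * h2
    -- ‖D‖ < 1
    have hbnd : ‖D‖ ≤ (1-ν)*(1-3*ν) + ν*(3*ν+2) := by
      rw [hD]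
      calc ‖(((1-ν)*(1-3*ν) : ℝ) : ℂ) - ((ν*(3*ν+2) : ℝ) : ℂ) * ζ‖
          ≤ ‖(((1-ν)*(1-3*ν) : ℝ) : ℂ)‖ + ‖((ν*(3*ν+2) : ℝ) : ℂ) * ζ‖ := norm_sub_le _ _
        _ = |(1-ν)*(1-3*ν)| + |ν*(3*ν+2)| * ‖ζ‖ := by
            rw [norm_mul, Complex.norm_real, Complex.norm_real, Real.norm_eq_abs,
              Real.norm_eq_abs]
        _ = (1-ν)*(1-3*ν) + ν*(3*ν+2) := by
            rw [hζ, mul_one, _root_.abs_of_nonneg (by nlinarith : (0:ℝ) ≤ (1-ν)*(1-3*ν)),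
              _root_.abs_of_nonneg (by nlinarith : (0:ℝ) ≤ ν*(3*ν+2))]
    have hDlt1 : ‖D‖ < 1 := by nlinarith [hbnd]
    -- norms of lam and μ
    have hxy : x * y = ‖D‖ := by rw [hx, hy, ← norm_mul, hprod]
    have hy0 : 0 ≤ y := norm_nonneg μ
    have hxylt : x * y < 1 := by rw [hxy]; exact hDlt1
    have hylt : y < 1 := by nlinarith
    -- lower bound on ‖T - D conj T‖
    have hlow : x * (1 - y ^ 2) - y * (x ^ 2 - 1) ≤ ‖T - D * (starRingEnd ℂ) T‖ := by
      have e1 : ‖lam * (1 - ((y ^ 2 : ℝ) : ℂ))‖ = x * (1 - y ^ 2) := by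
        rw [norm_mul, show (1 - ((y ^ 2 : ℝ) : ℂ)) = (((1 - y ^ 2 : ℝ)) : ℂ) by push_cast; ring,
          Complex.norm_real, Real.norm_eq_abs, _root_.abs_of_nonneg (by nlinarith)]
      have e2 : ‖μ * (1 - ((x ^ 2 : ℝ) : ℂ))‖ = y * (x ^ 2 - 1) := by
        rw [norm_mul, show (1 - ((x ^ 2 : ℝ) : ℂ)) = (((1 - x ^ 2 : ℝ)) : ℂ) by push_cast; ring,
          Complex.norm_real, Real.norm_eq_abs, _root_.abs_of_nonpos (by nlinarith)]
        ring
      have htri := norm_sub_norm_le (lam * (1 - ((y ^ 2 : ℝ) : ℂ)))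
        (-(μ * (1 - ((x ^ 2 : ℝ) : ℂ))))
      rw [norm_neg, sub_neg_eq_add, e1, e2] at htri
      rw [hkey]
      exact htri
    -- Schur upper bound  ‖T - D conj T‖ ≤ 1 - ‖D‖²
    have hDre : D = ((((1-ν)*(1-3*ν) - ν*(3*ν+2)*c : ℝ)) : ℂ)
        + ((-(ν*(3*ν+2)*s) : ℝ) : ℂ) * Complex.I := by
      rw [hD, hzeta]; push_cast; ring
    have nsq2 : ∀ a b : ℝ, ‖(a : ℂ) + (b : ℂ) * Complex.I‖ ^ 2 = a ^ 2 + b ^ 2 := by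
      intro a b
      rw [Complex.sq_norm, Complex.normSq_add_mul_I]
    have hnsD : ‖D‖ ^ 2 = ((1-ν)*(1-3*ν) - ν*(3*ν+2)*c) ^ 2 + (ν*(3*ν+2)*s) ^ 2 := by
      rw [hDre, nsq2]; ring
    have hGre : T - D * (starRingEnd ℂ) T
        = (((2-4*ν-3*ν^2)*(1-(1-ν)*(1-3*ν)) + ν*(3*ν+2)*(ν*(3*ν-2))
            + (ν*(3*ν-2) + ν*(3*ν+2)*(2-4*ν-3*ν^2) - (1-ν)*(1-3*ν)*(ν*(3*ν-2)))*c : ℝ) : ℂ)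
          + (((ν*(3*ν-2) + ν*(3*ν+2)*(2-4*ν-3*ν^2) + (1-ν)*(1-3*ν)*(ν*(3*ν-2)))*s : ℝ) : ℂ)
            * Complex.I := by
      have hcsC : (c:ℂ) ^ 2 + (s:ℂ) ^ 2 = 1 := by exact_mod_cast hcs
      rw [hT, hD, hzeta]
      simp only [map_add, map_sub, map_mul, Complex.conj_ofReal, Complex.conj_I]
      push_cast
      have hI : Complex.I ^ 2 = -1 := Complex.I_sq
      linear_combination ((ν:ℂ) * (3*(ν:ℂ)+2) * ((ν:ℂ) * (3*(ν:ℂ)-2))) * hcsC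
        + ((4*(ν:ℂ)^2 - 9*(ν:ℂ)^4) * (s:ℂ)^2) * hI
    have hnsG : ‖T - D * (starRingEnd ℂ) T‖ ^ 2
        = ((2-4*ν-3*ν^2)*(1-(1-ν)*(1-3*ν)) + ν*(3*ν+2)*(ν*(3*ν-2))
            + (ν*(3*ν-2) + ν*(3*ν+2)*(2-4*ν-3*ν^2) - (1-ν)*(1-3*ν)*(ν*(3*ν-2)))*c) ^ 2
          + ((ν*(3*ν-2) + ν*(3*ν+2)*(2-4*ν-3*ν^2) + (1-ν)*(1-3*ν)*(ν*(3*ν-2)))*s) ^ 2 := by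
      rw [hGre, nsq2]
    have hident : (1 - (((1-ν)*(1-3*ν) - ν*(3*ν+2)*c) ^ 2 + (ν*(3*ν+2)*s) ^ 2)) ^ 2
        - (((2-4*ν-3*ν^2)*(1-(1-ν)*(1-3*ν)) + ν*(3*ν+2)*(ν*(3*ν-2))
            + (ν*(3*ν-2) + ν*(3*ν+2)*(2-4*ν-3*ν^2) - (1-ν)*(1-3*ν)*(ν*(3*ν-2)))*c) ^ 2
          + ((ν*(3*ν-2) + ν*(3*ν+2)*(2-4*ν-3*ν^2) + (1-ν)*(1-3*ν)*(ν*(3*ν-2)))*s) ^ 2)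
        = 48*ν^4*(1-c)^2*(1-ν)*(1-3*ν)^2 := by
      linear_combination (-64*ν^3 - 32*ν^3*c - 144*ν^4 + 16*ν^4*s^2 - 16*ν^4*c + 16*ν^4*c^2
        + 1152*ν^5 + 96*ν^5*s^2 + 264*ν^5*c + 96*ν^5*c^2
        - 1188*ν^6 + 216*ν^6*s^2 + 324*ν^6*c + 216*ν^6*c^2
        + 216*ν^7*s^2 - 216*ν^7*c + 216*ν^7*c^2
        + 243*ν^8 + 81*ν^8*s^2 - 324*ν^8*c + 81*ν^8*c^2) * hcs
    have h48 : 0 ≤ 48*ν^4*(1-c)^2*(1-ν)*(1-3*ν)^2 := by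
      have h1ν : (0:ℝ) ≤ 1 - ν := by linarith
      exact mul_nonneg (mul_nonneg (mul_nonneg (by positivity) (sq_nonneg _)) h1ν)
        (sq_nonneg _)
    have hsq : ‖T - D * (starRingEnd ℂ) T‖ ^ 2 ≤ (1 - ‖D‖ ^ 2) ^ 2 := by
      rw [hnsG, hnsD]
      linarith [hident, h48]
    have hschur : ‖T - D * (starRingEnd ℂ) T‖ ≤ 1 - ‖D‖ ^ 2 := by
      have hb : (0:ℝ) ≤ 1 - ‖D‖ ^ 2 := by nlinarith [norm_nonneg D, hDlt1]
      nlinarith [norm_nonneg (T - D * (starRingEnd ℂ) T), hsq, hb,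
        sq_nonneg (‖T - D * (starRingEnd ℂ) T‖ - (1 - ‖D‖ ^ 2))]
    -- final contradiction
    have hchain : x * (1 - y ^ 2) - y * (x ^ 2 - 1) ≤ 1 - (x * y) ^ 2 := by
      rw [hxy]
      linarith [hlow, hschur]
    nlinarith [mul_pos (mul_pos (sub_pos.2 hx1) (sub_pos.2 hylt)) (sub_pos.2 hxylt), hchain]
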